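/- Let 0 < α_min ≤ α_max < 2. There exists a constant c > 0 depending only on α_min and α_max with the following property. Let N ≥ 2 be an integer, h = 1/N, let α_1, …, α_{N−1} ∈ [α_min, α_max] and b_1, …, b_{N−1} ≥ 0, and let A be the (N−1) × (N−1) real matrix with entries A_{jk} = h^{−α_j} a_{k−j}^{(α_j)} + b_j δ_{jk} (δ the Kronecker delta). Then A is invertible, and for every f ∈ ℝ^{N−1} the unique solution u of A u = f satisfies max_j |u_j| ≤ c max_j |f_j|. -/

import Mathlib

open MeasureTheory Real Matrix

noncomputable section

/-- The finite difference weight `a_n^{(α)} = (1/(2π)) ∫_{-π}^{π} e^{-inη} (4 sin²(η/2))^{α/2} dη`. -/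
def aWeightC (α : ℝ) (n : ℤ) : ℂ :=
  (1 / (2 * Real.pi)) • ∫ η in (-Real.pi)..Real.pi,
    Complex.exp (-Complex.I * (n : ℂ) * (η : ℂ)) *
      (((4 * Real.sin (η / 2) ^ 2) ^ (α / 2) : ℝ) : ℂ)

/-- The weight `a_n^{(α)}` as a real number (the integral is real-valued). -/
def aWeightR (α : ℝ) (n : ℤ) : ℝ := (aWeightC α n).re

namespace Stmt15Aux

/-- The symbol function. -/
def gfun (α η : ℝ) : ℝ := (4 * Real.sin (η / 2) ^ 2) ^ (α / 2)

lemma gfun_nonneg (α η : ℝ) : 0 ≤ gfun α η :=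
  Real.rpow_nonneg (by positivity) _

lemma base_eq (η : ℝ) : 4 * Real.sin (η / 2) ^ 2 = 2 - 2 * Real.cos η := by
  have h := Real.cos_two_mul (η / 2)
  have h2 : 2 * (η / 2) = η := by ring
  rw [h2] at h
  have h3 := Real.sin_sq_add_cos_sq (η / 2)
  nlinarith

lemma gfun_even (α η : ℝ) : gfun α (-η) = gfun α η := by
  unfold gfun
  rw [show -η / 2 = -(η / 2) by ring, Real.sin_neg]
  ring_nf

lemma gfun_zero (α : ℝ) (hα : 0 < α) : gfun α 0 = 0 := by
  unfold gfun
  simp [Real.zero_rpow (by positivity : α / 2 ≠ 0)]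

lemma gfun_cont (α : ℝ) (hα : 0 < α) : Continuous (gfun α) := by
  unfold gfun
  apply Continuous.rpow_const
  · continuity
  · intro η; right; positivity

lemma integral_sin_gfun (α : ℝ) (hα : 0 < α) (n : ℤ) :
    (∫ η in (-Real.pi)..Real.pi, Real.sin ((n : ℝ) * η) * gfun α η) = 0 := by
  have h := intervalIntegral.integral_comp_neg (a := -Real.pi) (b := Real.pi)
    (f := fun η => Real.sin ((n : ℝ) * η) * gfun α η)
  simp only [neg_neg] at h
  have h2 : (∫ η in (-Real.pi)..Real.pi,
      Real.sin ((n : ℝ) * (-η)) * gfun α (-η)) =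
      ∫ η in (-Real.pi)..Real.pi, -(Real.sin ((n : ℝ) * η) * gfun α η) := by
    apply intervalIntegral.integral_congr
    intro η _
    dsimp only
    rw [gfun_even, show (n : ℝ) * (-η) = -((n : ℝ) * η) by ring, Real.sin_neg]
    ring
  rw [h2, intervalIntegral.integral_neg] at h
  linarith

lemma aWeightR_eq (α : ℝ) (hα : 0 < α) (n : ℤ) :
    aWeightR α n = (1 / (2 * Real.pi)) *
      ∫ η in (-Real.pi)..Real.pi, Real.cos ((n : ℝ) * η) * gfun α η := by
  have hint1 : IntervalIntegrable
      (fun η => Real.cos ((n : ℝ) * η) * gfun α η) volume (-Real.pi) Real.pi :=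
    ((Real.continuous_cos.comp (continuous_const.mul continuous_id)).mul
      (gfun_cont α hα)).intervalIntegrable _ _
  have hint2 : IntervalIntegrable
      (fun η => Real.sin ((n : ℝ) * η) * gfun α η) volume (-Real.pi) Real.pi :=
    ((Real.continuous_sin.comp (continuous_const.mul continuous_id)).mul
      (gfun_cont α hα)).intervalIntegrable _ _
  have hint1C : IntervalIntegrable
      (fun η => ((Real.cos ((n : ℝ) * η) * gfun α η : ℝ) : ℂ)) volume (-Real.pi) Real.pi :=
    (Complex.continuous_ofReal.comp ((Real.continuous_cos.comp
      (continuous_const.mul continuous_id)).mul (gfun_cont α hα))).intervalIntegrable _ _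
  have hint2C : IntervalIntegrable
      (fun η => ((Real.sin ((n : ℝ) * η) * gfun α η : ℝ) : ℂ)) volume (-Real.pi) Real.pi :=
    (Complex.continuous_ofReal.comp ((Real.continuous_sin.comp
      (continuous_const.mul continuous_id)).mul (gfun_cont α hα))).intervalIntegrable _ _
  have key : (∫ η in (-Real.pi)..Real.pi,
      Complex.exp (-Complex.I * (n : ℂ) * (η : ℂ)) *
        (((4 * Real.sin (η / 2) ^ 2) ^ (α / 2) : ℝ) : ℂ)) =
      ((∫ η in (-Real.pi)..Real.pi, Real.cos ((n : ℝ) * η) * gfun α η : ℝ) : ℂ) := by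
    have hpt : ∀ η : ℝ,
        Complex.exp (-Complex.I * (n : ℂ) * (η : ℂ)) *
          (((4 * Real.sin (η / 2) ^ 2) ^ (α / 2) : ℝ) : ℂ) =
        ((Real.cos ((n : ℝ) * η) * gfun α η : ℝ) : ℂ) -
          Complex.I * ((Real.sin ((n : ℝ) * η) * gfun α η : ℝ) : ℂ) := by
      intro η
      have h1 : -Complex.I * (n : ℂ) * (η : ℂ) = ((-((n : ℝ) * η) : ℝ) : ℂ) * Complex.I := by
        push_cast; ring
      rw [h1, Complex.exp_mul_I, ← Complex.ofReal_cos, ← Complex.ofReal_sin,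
        Real.cos_neg, Real.sin_neg]
      unfold gfun
      push_cast
      ring
    rw [intervalIntegral.integral_congr (fun η _ => hpt η),
      intervalIntegral.integral_sub hint1C (hint2C.const_mul Complex.I),
      intervalIntegral.integral_const_mul, intervalIntegral.integral_ofReal,
      intervalIntegral.integral_ofReal, integral_sin_gfun α hα n]
    simp
  unfold aWeightR aWeightC
  rw [key, Complex.real_smul, ← Complex.ofReal_mul, Complex.ofReal_re]

lemma aWeightR_even (α : ℝ) (hα : 0 < α) (n : ℤ) :
    aWeightR α (-n) = aWeightR α n := by
  rw [aWeightR_eq α hα, aWeightR_eq α hα]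
  congr 1
  apply intervalIntegral.integral_congr
  intro η _
  push_cast
  rw [show -(n : ℝ) * η = -((n : ℝ) * η) by ring, Real.cos_neg]

lemma hasDerivAt_F (α : ℝ) (hα : 0 < α) (n : ℤ) {η : ℝ}
    (hη : η ∈ Set.uIcc (-Real.pi) Real.pi) :
    HasDerivAt (fun η => Real.cos ((n : ℝ) * η) * Real.sin η * gfun α η)
      ((-(n : ℝ) * Real.sin ((n : ℝ) * η) * Real.sin η
        + Real.cos ((n : ℝ) * η) * (Real.cos η + (α / 2) * (1 + Real.cos η))) * gfun α η) η := by
  have hπ : (0:ℝ) < Real.pi := Real.pi_pos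
  rw [Set.uIcc_of_le (by linarith : -Real.pi ≤ Real.pi)] at hη
  by_cases hη0 : η = 0
  · subst hη0
    have hD0 : (-(n : ℝ) * Real.sin ((n : ℝ) * 0) * Real.sin 0
        + Real.cos ((n : ℝ) * 0) * (Real.cos 0 + (α / 2) * (1 + Real.cos 0))) * gfun α 0
        = 0 := by
      simp [gfun_zero α hα]
    rw [hD0, hasDerivAt_iff_tendsto_slope]
    have htend : Filter.Tendsto (fun t => gfun α t) (nhdsWithin (0:ℝ) {(0:ℝ)}ᶜ) (nhds 0) := by
      have h0 : Filter.Tendsto (gfun α) (nhds (0:ℝ)) (nhds (gfun α 0)) :=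
        (gfun_cont α hα).tendsto 0
      rw [gfun_zero α hα] at h0
      exact h0.mono_left nhdsWithin_le_nhds
    refine squeeze_zero_norm ?_ htend
    intro t
    rcases eq_or_ne t 0 with rfl | ht
    · simp [slope_def_field, gfun_nonneg]
    · rw [slope_def_field]
      have hFt : |Real.cos ((n : ℝ) * t) * Real.sin t * gfun α t| ≤ |t| * gfun α t := by
        rw [abs_mul, abs_mul, abs_of_nonneg (gfun_nonneg α t)]
        have h1 : |Real.cos ((n : ℝ) * t)| ≤ 1 := Real.abs_cos_le_one _
        have h2 : |Real.sin t| ≤ |t| := Real.abs_sin_le_abs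
        have h3 : (0:ℝ) ≤ |Real.sin t| := abs_nonneg _
        calc |Real.cos ((n : ℝ) * t)| * |Real.sin t| * gfun α t
            ≤ 1 * |Real.sin t| * gfun α t := by
              apply mul_le_mul_of_nonneg_right _ (gfun_nonneg α t)
              exact mul_le_mul_of_nonneg_right h1 h3
          _ = |Real.sin t| * gfun α t := by ring
          _ ≤ |t| * gfun α t := mul_le_mul_of_nonneg_right h2 (gfun_nonneg α t)
      have hden : (0:ℝ) < |t - 0| := by simpa using abs_pos.mpr ht
      rw [Real.norm_eq_abs, abs_div]
      rw [div_le_iff₀ hden]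
      simp only [Real.sin_zero, mul_zero, zero_mul, sub_zero]
      calc |Real.cos ((n : ℝ) * t) * Real.sin t * gfun α t|
          ≤ |t| * gfun α t := hFt
        _ = gfun α t * |t| := by ring
  · -- η ≠ 0 : chain rule
    have hs2 : Real.sin (η / 2) ≠ 0 := by
      intro h0
      have h1 : -Real.pi < η / 2 := by
        rcases hη with ⟨hl, hr⟩; linarith
      have h2 : η / 2 < Real.pi := by
        rcases hη with ⟨hl, hr⟩; linarith
      exact hη0 (by linarith [(Real.sin_eq_zero_iff_of_lt_of_lt h1 h2).mp h0])
    have hx : (0:ℝ) < 4 * Real.sin (η / 2) ^ 2 := by positivity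
    have h1 : HasDerivAt (fun η : ℝ => η / 2) (1 / 2) η := (hasDerivAt_id η).div_const 2
    have h2 : HasDerivAt (fun η : ℝ => Real.sin (η / 2)) (Real.cos (η / 2) * (1 / 2)) η :=
      by have h := (Real.hasDerivAt_sin (η / 2)).comp η h1; exact h
    have h3 := (h2.pow 2).const_mul (4:ℝ)
    have hsin2 : Real.sin η = 2 * Real.sin (η / 2) * Real.cos (η / 2) := by
      conv_lhs => rw [show η = 2 * (η / 2) by ring]
      exact Real.sin_two_mul (η / 2)
    have hinner : HasDerivAt (fun η : ℝ => 4 * Real.sin (η / 2) ^ 2) (2 * Real.sin η) η := by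
      refine h3.congr_deriv ?_
      rw [hsin2]; push_cast; ring
    have hg : HasDerivAt (gfun α)
        ((2 * Real.sin η) * (α / 2) * (4 * Real.sin (η / 2) ^ 2) ^ (α / 2 - 1)) η := by
      exact hinner.rpow_const (Or.inl (ne_of_gt hx))
    have hc : HasDerivAt (fun η : ℝ => Real.cos ((n : ℝ) * η))
        (-Real.sin ((n : ℝ) * η) * (n : ℝ)) η := by
      have hl : HasDerivAt (fun η : ℝ => (n : ℝ) * η) ((n : ℝ)) η := by
        simpa using (hasDerivAt_id η).const_mul (n : ℝ)
      exact (Real.hasDerivAt_cos ((n : ℝ) * η)).comp η hl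
    have hcs := hc.mul (Real.hasDerivAt_sin η)
    have hFd := hcs.mul hg
    refine hFd.congr_deriv ?_
    symm
    have hxpow : (4 * Real.sin (η / 2) ^ 2) ^ (α / 2)
        = (4 * Real.sin (η / 2) ^ 2) ^ (α / 2 - 1) * (4 * Real.sin (η / 2) ^ 2) := by
      calc (4 * Real.sin (η / 2) ^ 2) ^ (α / 2)
          = (4 * Real.sin (η / 2) ^ 2) ^ (α / 2 - 1 + 1) := by norm_num
        _ = (4 * Real.sin (η / 2) ^ 2) ^ (α / 2 - 1)
              * (4 * Real.sin (η / 2) ^ 2) ^ (1:ℝ) := Real.rpow_add hx _ _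
        _ = (4 * Real.sin (η / 2) ^ 2) ^ (α / 2 - 1) * (4 * Real.sin (η / 2) ^ 2) := by
              rw [Real.rpow_one]
    have h2s : 2 * Real.sin η ^ 2 = (1 + Real.cos η) * (4 * Real.sin (η / 2) ^ 2) := by
      rw [base_eq]
      nlinarith [Real.sin_sq_add_cos_sq η]
    show (-(n : ℝ) * Real.sin ((n : ℝ) * η) * Real.sin η
        + Real.cos ((n : ℝ) * η) * (Real.cos η + (α / 2) * (1 + Real.cos η)))
          * gfun α η = _
    unfold gfun
    rw [hxpow]
    simp only [Pi.mul_apply]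
    linear_combination (-(α / 2) * Real.cos ((n : ℝ) * η)
      * (4 * Real.sin (η / 2) ^ 2) ^ (α / 2 - 1)) * h2s

/-- The key three-term identity obtained from integrating a total derivative. -/
lemma key_identity (α : ℝ) (hα : 0 < α) (hα2 : α < 2) (n : ℤ) :
    (1 + α / 2 - (n : ℝ)) * aWeightR α (n - 1) + (1 + α / 2 + (n : ℝ)) * aWeightR α (n + 1)
      + α * aWeightR α n = 0 := by
  have hπ : (0:ℝ) < Real.pi := Real.pi_pos
  set D : ℝ → ℝ := fun η =>
    (-(n : ℝ) * Real.sin ((n : ℝ) * η) * Real.sin η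
      + Real.cos ((n : ℝ) * η) * (Real.cos η + (α / 2) * (1 + Real.cos η))) * gfun α η with hD
  have hDcont : Continuous D := by
    apply Continuous.mul _ (gfun_cont α hα)
    continuity
  have hFTC : (∫ η in (-Real.pi)..Real.pi, D η)
      = Real.cos ((n : ℝ) * Real.pi) * Real.sin Real.pi * gfun α Real.pi
        - Real.cos ((n : ℝ) * (-Real.pi)) * Real.sin (-Real.pi) * gfun α (-Real.pi) :=
    intervalIntegral.integral_eq_sub_of_hasDerivAt
      (fun η hη => hasDerivAt_F α hα n hη) (hDcont.intervalIntegrable _ _)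
  have hzero : (∫ η in (-Real.pi)..Real.pi, D η) = 0 := by
    rw [hFTC]; simp [Real.sin_pi]
  have hIk : ∀ m : ℤ, IntervalIntegrable
      (fun η => Real.cos ((m : ℝ) * η) * gfun α η) volume (-Real.pi) Real.pi :=
    fun m => ((Real.continuous_cos.comp (continuous_const.mul continuous_id)).mul
      (gfun_cont α hα)).intervalIntegrable _ _
  have hpt : ∀ η : ℝ, D η =
      ((1 + α / 2 - (n : ℝ)) / 2) * (Real.cos (((n - 1 : ℤ) : ℝ) * η) * gfun α η)
    + ((1 + α / 2 + (n : ℝ)) / 2) * (Real.cos (((n + 1 : ℤ) : ℝ) * η) * gfun α η)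
    + (α / 2) * (Real.cos ((n : ℝ) * η) * gfun α η) := by
    intro η
    have e1 : ((n - 1 : ℤ) : ℝ) * η = (n : ℝ) * η - η := by push_cast; ring
    have e2 : ((n + 1 : ℤ) : ℝ) * η = (n : ℝ) * η + η := by push_cast; ring
    rw [hD, e1, e2, Real.cos_sub, Real.cos_add]
    ring
  have hsplit : (∫ η in (-Real.pi)..Real.pi, D η)
      = ((1 + α / 2 - (n : ℝ)) / 2) * (∫ η in (-Real.pi)..Real.pi,
          Real.cos (((n - 1 : ℤ) : ℝ) * η) * gfun α η)
      + ((1 + α / 2 + (n : ℝ)) / 2) * (∫ η in (-Real.pi)..Real.pi,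
          Real.cos (((n + 1 : ℤ) : ℝ) * η) * gfun α η)
      + (α / 2) * (∫ η in (-Real.pi)..Real.pi, Real.cos ((n : ℝ) * η) * gfun α η) := by
    rw [intervalIntegral.integral_congr (fun η _ => hpt η)]
    rw [intervalIntegral.integral_add (((hIk (n - 1)).const_mul _).add
        ((hIk (n + 1)).const_mul _)) ((hIk n).const_mul _),
      intervalIntegral.integral_add ((hIk (n - 1)).const_mul _) ((hIk (n + 1)).const_mul _),
      intervalIntegral.integral_const_mul, intervalIntegral.integral_const_mul,
      intervalIntegral.integral_const_mul]
  have hIm : ∀ m : ℤ, (∫ η in (-Real.pi)..Real.pi, Real.cos ((m : ℝ) * η) * gfun α η)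
      = 2 * Real.pi * aWeightR α m := by
    intro m
    rw [aWeightR_eq α hα m]
    field_simp
  rw [hzero, hIm, hIm, hIm] at hsplit
  have hπ' : Real.pi ≠ 0 := ne_of_gt hπ
  have h2 : Real.pi * ((1 + α / 2 - (n : ℝ)) * aWeightR α (n - 1)
      + (1 + α / 2 + (n : ℝ)) * aWeightR α (n + 1) + α * aWeightR α n) = 0 := by
    linear_combination -hsplit
  exact (mul_eq_zero.mp h2).resolve_left hπ'

lemma rec_aux (α : ℝ) (hα : 0 < α) (hα2 : α < 2) (n : ℕ) :
    ((n : ℝ) + 1 + α / 2) * aWeightR α ((n : ℤ) + 1)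
      = ((n : ℝ) - α / 2) * aWeightR α (n : ℤ) := by
  induction n with
  | zero =>
    have hk := key_identity α hα hα2 0
    have he : aWeightR α (0 - 1) = aWeightR α (0 + 1) := by
      rw [show (0 - 1 : ℤ) = -(0 + 1) by ring, aWeightR_even α hα]
    rw [he] at hk
    norm_num at hk ⊢
    linear_combination hk / 2
  | succ m ih =>
    have hk := key_identity α hα hα2 ((m : ℤ) + 1)
    have e1 : ((m : ℤ) + 1 - 1) = (m : ℤ) := by ring
    rw [e1] at hk
    push_cast at hk ih ⊢
    linear_combination hk - ih

lemma a0_ge (α : ℝ) (hα : 0 < α) : 1 / 2 ≤ aWeightR α 0 := by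
  rw [aWeightR_eq α hα 0]
  have hπ := Real.pi_pos
  have hint : ∀ a b : ℝ, IntervalIntegrable (gfun α) volume a b :=
    fun a b => (gfun_cont α hα).intervalIntegrable a b
  have hsimp : (∫ η in (-Real.pi)..Real.pi, Real.cos (((0:ℤ) : ℝ) * η) * gfun α η)
      = ∫ η in (-Real.pi)..Real.pi, gfun α η := by
    apply intervalIntegral.integral_congr
    intro η _
    dsimp only
    norm_num
  rw [hsimp]
  have hone : ∀ η : ℝ, η ∈ Set.Icc (Real.pi / 2) Real.pi → (1:ℝ) ≤ gfun α η := by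
    intro η hη
    unfold gfun
    have hcos : Real.cos η ≤ 0 :=
      Real.cos_nonpos_of_pi_div_two_le_of_le hη.1 (by linarith [hη.2])
    have hb : (1:ℝ) ≤ 4 * Real.sin (η / 2) ^ 2 := by rw [base_eq]; linarith
    calc (1:ℝ) = 1 ^ (α / 2) := (Real.one_rpow _).symm
      _ ≤ (4 * Real.sin (η / 2) ^ 2) ^ (α / 2) :=
          Real.rpow_le_rpow (by norm_num) hb (by positivity)
  have hright : Real.pi / 2 ≤ ∫ η in (Real.pi / 2)..Real.pi, gfun α η := by
    have hm := intervalIntegral.integral_mono_on (by linarith : Real.pi / 2 ≤ Real.pi)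
      (intervalIntegrable_const (c := (1:ℝ))) (hint _ _) hone
    rw [intervalIntegral.integral_const] at hm
    simp only [smul_eq_mul, mul_one] at hm
    linarith
  have hleft : Real.pi / 2 ≤ ∫ η in (-Real.pi)..(-(Real.pi / 2)), gfun α η := by
    have hcomp := intervalIntegral.integral_comp_neg (a := Real.pi / 2) (b := Real.pi)
      (f := gfun α)
    have he : (∫ η in (Real.pi / 2)..Real.pi, gfun α (-η))
        = ∫ η in (Real.pi / 2)..Real.pi, gfun α η := by
      apply intervalIntegral.integral_congr
      intro η _
      exact gfun_even α η
    rw [he] at hcomp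
    rw [← hcomp]
    exact hright
  have hmid : 0 ≤ ∫ η in (-(Real.pi / 2))..(Real.pi / 2), gfun α η :=
    intervalIntegral.integral_nonneg (by linarith) (fun x _ => gfun_nonneg α x)
  have hsplit2 : (∫ η in (-(Real.pi / 2))..Real.pi, gfun α η)
      = (∫ η in (-(Real.pi / 2))..(Real.pi / 2), gfun α η)
        + ∫ η in (Real.pi / 2)..Real.pi, gfun α η :=
    (intervalIntegral.integral_add_adjacent_intervals (hint _ _) (hint _ _)).symm
  have hsplit1 : (∫ η in (-Real.pi)..Real.pi, gfun α η)
      = (∫ η in (-Real.pi)..(-(Real.pi / 2)), gfun α η)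
        + ∫ η in (-(Real.pi / 2))..Real.pi, gfun α η :=
    (intervalIntegral.integral_add_adjacent_intervals (hint _ _) (hint _ _)).symm
  have htot : Real.pi ≤ ∫ η in (-Real.pi)..Real.pi, gfun α η := by
    rw [hsplit1, hsplit2]
    linarith
  rw [div_mul_eq_mul_div, le_div_iff₀ (by linarith : (0:ℝ) < 2 * Real.pi)]
  linarith

lemma aNeg (α : ℝ) (hα : 0 < α) (hα2 : α < 2) : ∀ n : ℕ, aWeightR α ((n : ℤ) + 1) < 0 := by
  intro n
  induction n with
  | zero =>
    have h := rec_aux α hα hα2 0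
    have h0 := a0_ge α hα
    norm_num at h ⊢
    nlinarith
  | succ m ih =>
    have h := rec_aux α hα hα2 (m + 1)
    have hm : (0:ℝ) ≤ (m:ℝ) := Nat.cast_nonneg m
    push_cast at h ⊢
    nlinarith

lemma aNeg_int (α : ℝ) (hα : 0 < α) (hα2 : α < 2) (n : ℤ) (hn : 1 ≤ n) :
    aWeightR α n < 0 := by
  obtain ⟨m, rfl⟩ : ∃ m : ℕ, n = (m : ℤ) + 1 := ⟨(n - 1).toNat, by omega⟩
  exact aNeg α hα hα2 m

lemma aNonpos (α : ℝ) (hα : 0 < α) (hα2 : α < 2) (n : ℤ) (hn : n ≠ 0) :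
    aWeightR α n < 0 := by
  rcases lt_or_gt_of_ne hn with h | h
  · have he := aWeightR_even α hα (-n)
    simp only [neg_neg] at he
    rw [he]
    exact aNeg_int α hα hα2 (-n) (by omega)
  · exact aNeg_int α hα hα2 n (by omega)

lemma w_mono_ge (α : ℝ) (hα : 0 < α) (hα2 : α < 2) : ∀ n : ℕ,
    (α / 8) * (1 - α / 2) ^ 3
      ≤ (-(aWeightR α ((n : ℤ) + 1))) * ((((n : ℝ) + 1) - α / 2) ^ (1 + α)) := by
  intro n
  induction n with
  | zero =>
    have hrec := rec_aux α hα hα2 0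
    have ha0 := a0_ge α hα
    norm_num at hrec
    have ha1 : α / 8 ≤ -(aWeightR α 1) := by nlinarith
    have hp : ((1:ℝ) - α / 2) ^ ((3:ℕ) : ℝ) ≤ (1 - α / 2) ^ (1 + α) :=
      Real.rpow_le_rpow_of_exponent_ge (by linarith) (by linarith) (by push_cast; linarith)
    rw [Real.rpow_natCast] at hp
    have hfin : (α / 8) * (1 - α / 2) ^ 3 ≤ (-(aWeightR α 1)) * ((1 - α / 2) ^ (1 + α)) := by
      calc (α / 8) * (1 - α / 2) ^ 3 ≤ (α / 8) * (1 - α / 2) ^ (1 + α) :=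
            mul_le_mul_of_nonneg_left hp (by positivity)
        _ ≤ (-(aWeightR α 1)) * ((1 - α / 2) ^ (1 + α)) :=
            mul_le_mul_of_nonneg_right ha1 (Real.rpow_nonneg (by linarith) _)
    have e : (((0:ℕ) : ℝ) + 1) - α / 2 = 1 - α / 2 := by norm_num
    rw [show ((0:ℕ) : ℤ) + 1 = (1:ℤ) by norm_num, e]
    exact hfin
  | succ m ih =>
    have hm : (0:ℝ) ≤ (m:ℝ) := Nat.cast_nonneg m
    set x : ℝ := ((m : ℝ) + 1) - α / 2 with hxdef
    have hxpos : 0 < x := by rw [hxdef]; linarith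
    have hrec := rec_aux α hα hα2 (m + 1)
    have haneg : aWeightR α ((m : ℤ) + 1) < 0 := aNeg α hα hα2 m
    have hb : 1 + (1 + α) * (1 / x) ≤ (1 + 1 / x) ^ (1 + α) := by
      have h0x : (0:ℝ) ≤ 1 / x := by positivity
      exact one_add_mul_self_le_rpow_one_add (by linarith) (by linarith)
    have h1 : (x + 1) ^ (1 + α) = x ^ (1 + α) * (1 + 1 / x) ^ (1 + α) := by
      rw [← Real.mul_rpow (le_of_lt hxpos) (by positivity)]
      congr 1
      field_simp
    have hmul : (x + (1 + α)) * x ^ (1 + α) ≤ (x + 1) ^ (1 + α) * x := by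
      rw [h1]
      have hc : (x + (1 + α)) * x ^ (1 + α)
          = x ^ (1 + α) * ((1 + (1 + α) * (1 / x)) * x) := by
        field_simp
      rw [hc]
      calc x ^ (1 + α) * ((1 + (1 + α) * (1 / x)) * x)
          ≤ x ^ (1 + α) * ((1 + 1 / x) ^ (1 + α) * x) := by
            apply mul_le_mul_of_nonneg_left _ (Real.rpow_nonneg (le_of_lt hxpos) _)
            exact mul_le_mul_of_nonneg_right hb (le_of_lt hxpos)
        _ = x ^ (1 + α) * (1 + 1 / x) ^ (1 + α) * x := by ring
    -- recurrence in terms of x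
    have hrec' : (x + (1 + α)) * (-(aWeightR α ((m : ℤ) + 1 + 1)))
        = x * (-(aWeightR α ((m : ℤ) + 1))) := by
      push_cast at hrec
      rw [hxdef]
      push_cast
      linear_combination -hrec
    have hA1 : 0 ≤ -(aWeightR α ((m : ℤ) + 1)) := by linarith
    have hA2 : 0 ≤ -(aWeightR α ((m : ℤ) + 1 + 1)) := by
      have := aNeg α hα hα2 (m + 1)
      push_cast at this ⊢
      linarith
    have hxa : 0 < x + (1 + α) := by linarith
    -- multiply ih by hmul chain
    have hstep : (-(aWeightR α ((m : ℤ) + 1))) * x ^ (1 + α) * (x + (1 + α))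
        ≤ (-(aWeightR α ((m : ℤ) + 1 + 1))) * ((x + 1) ^ (1 + α)) * (x + (1 + α)) := by
      have h2 : (-(aWeightR α ((m : ℤ) + 1 + 1))) * ((x + 1) ^ (1 + α)) * (x + (1 + α))
          = ((x + (1 + α)) * (-(aWeightR α ((m : ℤ) + 1 + 1)))) * (x + 1) ^ (1 + α) := by
        ring
      rw [h2, hrec']
      calc (-(aWeightR α ((m : ℤ) + 1))) * x ^ (1 + α) * (x + (1 + α))
          = (-(aWeightR α ((m : ℤ) + 1))) * ((x + (1 + α)) * x ^ (1 + α)) := by ring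
        _ ≤ (-(aWeightR α ((m : ℤ) + 1))) * ((x + 1) ^ (1 + α) * x) :=
            mul_le_mul_of_nonneg_left hmul hA1
        _ = x * (-(aWeightR α ((m : ℤ) + 1))) * (x + 1) ^ (1 + α) := by ring
    have hfinal : (-(aWeightR α ((m : ℤ) + 1))) * x ^ (1 + α)
        ≤ (-(aWeightR α ((m : ℤ) + 1 + 1))) * ((x + 1) ^ (1 + α)) :=
      le_of_mul_le_mul_right hstep hxa
    have e2 : (((m + 1 : ℕ) : ℝ) + 1) - α / 2 = x + 1 := by rw [hxdef]; push_cast; ring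
    have e3 : ((m + 1 : ℕ) : ℤ) + 1 = (m : ℤ) + 1 + 1 := by push_cast; ring
    rw [e2, e3]
    exact le_trans ih hfinal

lemma philower (α : ℝ) (hα : 0 < α) (hα2 : α < 2) (n : ℕ) :
    (α / 8) * (1 - α / 2) ^ 3 * (((n : ℝ) + 1)) ^ (-α)
      ≤ (((n : ℝ) + 1) - α / 2) * (-(aWeightR α ((n : ℤ) + 1))) := by
  have hm : (0:ℝ) ≤ (n:ℝ) := Nat.cast_nonneg n
  set x : ℝ := ((n : ℝ) + 1) - α / 2 with hxdef
  have hxpos : 0 < x := by rw [hxdef]; linarith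
  have h1 := w_mono_ge α hα hα2 n
  have hexp : x ^ (1 + α) * x ^ (-α) = x := by
    rw [← Real.rpow_add hxpos]
    norm_num
  have hxn : (((n : ℝ) + 1)) ^ (-α) ≤ x ^ (-α) :=
    Real.rpow_le_rpow_of_nonpos hxpos (by rw [hxdef]; linarith) (by linarith)
  have hc : (0:ℝ) ≤ (α / 8) * (1 - α / 2) ^ 3 := by
    have : (0:ℝ) < 1 - α / 2 := by linarith
    positivity
  calc (α / 8) * (1 - α / 2) ^ 3 * (((n : ℝ) + 1)) ^ (-α)
      ≤ (α / 8) * (1 - α / 2) ^ 3 * x ^ (-α) := mul_le_mul_of_nonneg_left hxn hc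
    _ ≤ ((-(aWeightR α ((n : ℤ) + 1))) * x ^ (1 + α)) * x ^ (-α) :=
        mul_le_mul_of_nonneg_right h1 (Real.rpow_nonneg (le_of_lt hxpos) _)
    _ = (-(aWeightR α ((n : ℤ) + 1))) * (x ^ (1 + α) * x ^ (-α)) := by ring
    _ = x * (-(aWeightR α ((n : ℤ) + 1))) := by rw [hexp]; ring

lemma phi_step (α : ℝ) (hα : 0 < α) (hα2 : α < 2) (m : ℤ) :
    ((m : ℝ) + α / 2) * aWeightR α m - (((m : ℝ) + 1) + α / 2) * aWeightR α (m + 1)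
      = α * aWeightR α m := by
  rcases le_or_gt 0 m with hm | hm
  · lift m to ℕ using hm
    have h := rec_aux α hα hα2 m
    push_cast at h ⊢
    linear_combination -h
  · obtain ⟨n, rfl⟩ : ∃ n : ℕ, m = -((n : ℤ) + 1) := ⟨(-m - 1).toNat, by omega⟩
    have h := rec_aux α hα hα2 n
    have e1 : aWeightR α (-((n : ℤ) + 1)) = aWeightR α ((n : ℤ) + 1) :=
      aWeightR_even α hα ((n : ℤ) + 1)
    have e2 : aWeightR α (-((n : ℤ) + 1) + 1) = aWeightR α ((n : ℤ)) := by
      rw [show (-((n : ℤ) + 1) + 1) = -(n : ℤ) by ring, aWeightR_even α hα]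
    rw [e1, e2]
    push_cast at h ⊢
    linear_combination -h

lemma telescope (α : ℝ) (hα : 0 < α) (hα2 : α < 2) (j M : ℕ) :
    α * ∑ k ∈ Finset.range M, aWeightR α ((k : ℤ) - (j : ℤ))
      = ((-(j : ℝ)) + α / 2) * aWeightR α (-(j : ℤ))
        - (((M : ℝ) - (j : ℝ)) + α / 2) * aWeightR α ((M : ℤ) - (j : ℤ)) := by
  have key : α * ∑ k ∈ Finset.range M, aWeightR α ((k : ℤ) - (j : ℤ))
      = ∑ k ∈ Finset.range M,
          ((fun i : ℕ => (((i : ℝ) - (j : ℝ)) + α / 2) * aWeightR α ((i : ℤ) - (j : ℤ))) k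
            - (fun i : ℕ =>
                (((i : ℝ) - (j : ℝ)) + α / 2) * aWeightR α ((i : ℤ) - (j : ℤ))) (k + 1)) := by
    rw [Finset.mul_sum]
    apply Finset.sum_congr rfl
    intro k _
    have h := phi_step α hα hα2 ((k : ℤ) - (j : ℤ))
    dsimp only
    have e1 : ((k : ℤ) - (j : ℤ) + 1) = ((k + 1 : ℕ) : ℤ) - (j : ℤ) := by push_cast; ring
    rw [e1] at h
    push_cast at h ⊢
    linear_combination -h
  rw [key, Finset.sum_range_sub']
  norm_num

lemma sum_lower (α : ℝ) (hα : 0 < α) (hα2 : α < 2) (M jv : ℕ) (hj : jv + 1 ≤ M) :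
    (α / 8) * (1 - α / 2) ^ 3 * ((max jv 1 : ℕ) : ℝ) ^ (-α)
      ≤ α * ∑ k ∈ Finset.range M, aWeightR α ((k : ℤ) - (jv : ℤ)) := by
  rw [telescope α hα hα2 jv M]
  have hMj : (1:ℤ) ≤ (M : ℤ) - (jv : ℤ) := by omega
  have ha2 : aWeightR α ((M : ℤ) - (jv : ℤ)) < 0 := aNeg_int α hα hα2 _ hMj
  have hMjR : (1:ℝ) ≤ (M : ℝ) - (jv : ℝ) := by
    have : ((1:ℤ) : ℝ) ≤ (((M : ℤ) - (jv : ℤ)) : ℝ) := by exact_mod_cast hMj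
    push_cast at this
    linarith
  have hterm2 : 0 ≤ -((((M : ℝ) - (jv : ℝ)) + α / 2) * aWeightR α ((M : ℤ) - (jv : ℤ))) := by
    have hco : 0 < ((M : ℝ) - (jv : ℝ)) + α / 2 := by linarith
    nlinarith
  rcases Nat.eq_zero_or_pos jv with h0 | hpos
  · subst h0
    have ha0 := a0_ge α hα
    have hp1 : ((1:ℝ) - α / 2) ^ 3 ≤ 1 := by
      apply pow_le_one₀ (by linarith) (by linarith)
    have hmax : ((max 0 1 : ℕ) : ℝ) = 1 := by norm_num
    rw [hmax, Real.one_rpow]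
    simp only [Nat.cast_zero, neg_zero, Int.cast_zero, zero_add, sub_zero, mul_one]
    have h1 : (α / 8) * (1 - α / 2) ^ 3 ≤ α / 8 := by nlinarith
    have h2 : α / 8 ≤ α / 2 * aWeightR α 0 := by nlinarith
    simp only [Nat.cast_zero, sub_zero] at hterm2
    linarith [hterm2]
  · obtain ⟨n, rfl⟩ : ∃ n : ℕ, jv = n + 1 := ⟨jv - 1, by omega⟩
    have hmax2 : (max (n + 1) 1 : ℕ) = n + 1 := by omega
    have he : aWeightR α (-(((n + 1 : ℕ)) : ℤ)) = aWeightR α ((n : ℤ) + 1) := by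
      rw [show (((n + 1 : ℕ)) : ℤ) = (n : ℤ) + 1 by push_cast; ring]
      exact aWeightR_even α hα ((n : ℤ) + 1)
    have hphi := philower α hα hα2 n
    rw [hmax2]
    have hfirst : ((-(((n + 1 : ℕ)) : ℝ)) + α / 2) * aWeightR α (-(((n + 1 : ℕ)) : ℤ))
        = (((n : ℝ) + 1) - α / 2) * (-(aWeightR α ((n : ℤ) + 1))) := by
      rw [he]
      push_cast
      ring
    rw [hfirst]
    have hcast : ((n + 1 : ℕ) : ℝ) = (n : ℝ) + 1 := by push_cast; ring
    rw [hcast]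
    push_cast at hterm2 ⊢
    linarith [hphi, hterm2]

lemma maxpr {M : ℕ} (A : Matrix (Fin M) (Fin M) ℝ) (c : ℝ)
    (hoff : ∀ j k, j ≠ k → A j k ≤ 0) (u : Fin M → ℝ) (j₀ : Fin M)
    (hrow : c ≤ ∑ k, A j₀ k)
    (hmax : ∀ j, u j ≤ u j₀) (h0 : 0 ≤ u j₀) :
    c * u j₀ ≤ A.mulVec u j₀ := by
  have h1 : ∀ k, A j₀ k * u j₀ ≤ A j₀ k * u k := by
    intro k
    rcases eq_or_ne j₀ k with rfl | hk
    · exact le_refl _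
    · exact mul_le_mul_of_nonpos_left (hmax k) (hoff j₀ k hk)
  calc c * u j₀ ≤ (∑ k, A j₀ k) * u j₀ := mul_le_mul_of_nonneg_right hrow h0
    _ = ∑ k, A j₀ k * u j₀ := by rw [Finset.sum_mul]
    _ ≤ ∑ k, A j₀ k * u k := Finset.sum_le_sum (fun k _ => h1 k)
    _ = A.mulVec u j₀ := by rw [Matrix.mulVec, dotProduct]

end Stmt15Aux

/-- Unique solvability and maximum-norm stability of the finite difference scheme:
the stiffness matrix `A_{jk} = h^{-α_j} a_{k-j}^{(α_j)} + b_j δ_{jk}` (with `h = 1/N`,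
indices `j,k = 1,…,N-1`) is invertible and `‖u‖_∞ ≤ c ‖f‖_∞` whenever `A u = f`,
with `c` depending only on `α_min, α_max`. -/
theorem stmt15 (αmin αmax : ℝ) (h1 : 0 < αmin) (h2 : αmin ≤ αmax) (h3 : αmax < 2) :
    ∃ c : ℝ, 0 < c ∧
      ∀ N : ℕ, 2 ≤ N →
        ∀ αv bv : Fin (N - 1) → ℝ,
          (∀ j, αmin ≤ αv j ∧ αv j ≤ αmax) → (∀ j, 0 ≤ bv j) →
          ∀ A : Matrix (Fin (N - 1)) (Fin (N - 1)) ℝ,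
            (∀ j k, A j k = ((1 : ℝ) / N) ^ (-(αv j)) * aWeightR (αv j) ((k : ℤ) - (j : ℤ))
              + (if j = k then bv j else 0)) →
            IsUnit A ∧
            ∀ f u : Fin (N - 1) → ℝ, A.mulVec u = f →
              ∀ j, |u j| ≤ c * ⨆ k, |f k| := by
  classical
  open Stmt15Aux in
  have h20 : (0:ℝ) < 1 - αmax / 2 := by linarith
  set c0 : ℝ := (αmin / 8) * (1 - αmax / 2) ^ 3 with hc0def
  have hc0pos : 0 < c0 := by positivity
  refine ⟨2 / c0, by positivity, ?_⟩
  intro N hN αv bv hαv hbv A hA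
  have hMpos : 0 < N - 1 := by omega
  haveI : Nonempty (Fin (N - 1)) := Fin.pos_iff_nonempty.mp hMpos
  have hNpos : (0:ℝ) < (N:ℝ) := by
    have : 0 < N := by omega
    exact_mod_cast this
  have hα0 : ∀ j, 0 < αv j := fun j => lt_of_lt_of_le h1 (hαv j).1
  have hα2' : ∀ j, αv j < 2 := fun j => lt_of_le_of_lt (hαv j).2 h3
  have hpow : ∀ j, ((1:ℝ) / N) ^ (-(αv j)) = (N:ℝ) ^ (αv j) := by
    intro j
    rw [one_div, Real.inv_rpow (le_of_lt hNpos), Real.rpow_neg (le_of_lt hNpos), inv_inv]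
  have hpowpos : ∀ j, 0 < (N:ℝ) ^ (αv j) := fun j => Real.rpow_pos_of_pos hNpos _
  -- off-diagonal entries are nonpositive
  have hoff : ∀ j k, j ≠ k → A j k ≤ 0 := by
    intro j k hjk
    rw [hA j k, if_neg hjk, add_zero, hpow j]
    have hne : ((k : ℕ) : ℤ) - ((j : ℕ) : ℤ) ≠ 0 := by
      have : (j : ℕ) ≠ (k : ℕ) := fun h => hjk (Fin.ext h)
      omega
    have han := aNonpos (αv j) (hα0 j) (hα2' j) _ hne
    nlinarith [hpowpos j]
  -- row sums are bounded below
  have hrow : ∀ j, c0 / 2 ≤ ∑ k, A j k := by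
    intro j
    have hαpos := hα0 j
    have hαlt := hα2' j
    have hsumA : ∑ k, A j k = (N:ℝ) ^ (αv j)
        * (∑ k ∈ Finset.range (N - 1), aWeightR (αv j) ((k : ℤ) - ((j : ℕ) : ℤ)))
        + bv j := by
      rw [Finset.sum_congr rfl (fun k _ => hA j k), Finset.sum_add_distrib]
      congr 1
      · rw [← Finset.mul_sum, hpow j]
        congr 1
        exact Fin.sum_univ_eq_sum_range
          (fun k : ℕ => aWeightR (αv j) ((k : ℤ) - ((j : ℕ) : ℤ))) (N - 1)
      · simp
    have hj1 : (j : ℕ) + 1 ≤ N - 1 := by omega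
    have hsl := sum_lower (αv j) hαpos hαlt (N - 1) (j : ℕ) hj1
    set mx : ℕ := max (j : ℕ) 1 with hmxdef
    have hmx1 : 1 ≤ mx := le_max_right _ _
    have hmxN : mx ≤ N := by omega
    have hmxR : (0:ℝ) < (mx : ℝ) := by exact_mod_cast hmx1
    have hmxNR : (mx : ℝ) ≤ (N : ℝ) := by exact_mod_cast hmxN
    have hNx : (N:ℝ) ^ (-(αv j)) ≤ (mx : ℝ) ^ (-(αv j)) :=
      Real.rpow_le_rpow_of_nonpos hmxR hmxNR (by linarith)
    have hNN : (N:ℝ) ^ (αv j) * (N:ℝ) ^ (-(αv j)) = 1 := by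
      rw [← Real.rpow_add hNpos]
      norm_num
    have hone : 1 ≤ (N:ℝ) ^ (αv j) * (mx : ℝ) ^ (-(αv j)) := by
      calc (1:ℝ) = (N:ℝ) ^ (αv j) * (N:ℝ) ^ (-(αv j)) := hNN.symm
        _ ≤ (N:ℝ) ^ (αv j) * (mx : ℝ) ^ (-(αv j)) :=
            mul_le_mul_of_nonneg_left hNx (le_of_lt (hpowpos j))
    have hcc : c0 ≤ (αv j / 8) * (1 - αv j / 2) ^ 3 := by
      have e1 : 1 - αmax / 2 ≤ 1 - αv j / 2 := by linarith [(hαv j).2]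
      have e2 : (1 - αmax / 2) ^ 3 ≤ (1 - αv j / 2) ^ 3 :=
        pow_le_pow_left₀ (le_of_lt h20) e1 3
      have e3 : αmin / 8 ≤ αv j / 8 := by linarith [(hαv j).1]
      rw [hc0def]
      have e4 : (0:ℝ) ≤ (1 - αmax / 2) ^ 3 := by positivity
      nlinarith
    -- multiply hsl by N^α
    have hS : c0 ≤ αv j * ∑ k, A j k := by
      have h5 : (N:ℝ) ^ (αv j) * ((αv j / 8) * (1 - αv j / 2) ^ 3 * (mx : ℝ) ^ (-(αv j)))
          ≤ (N:ℝ) ^ (αv j) * (αv j *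
            ∑ k ∈ Finset.range (N - 1), aWeightR (αv j) ((k : ℤ) - ((j : ℕ) : ℤ))) :=
        mul_le_mul_of_nonneg_left hsl (le_of_lt (hpowpos j))
      have hc3 : (0:ℝ) ≤ (αv j / 8) * (1 - αv j / 2) ^ 3 := by
        have : (0:ℝ) < 1 - αv j / 2 := by linarith
        positivity
      have h6 : c0 ≤ (N:ℝ) ^ (αv j) * ((αv j / 8) * (1 - αv j / 2) ^ 3
          * (mx : ℝ) ^ (-(αv j))) := by
        calc c0 ≤ (αv j / 8) * (1 - αv j / 2) ^ 3 := hcc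
          _ = ((αv j / 8) * (1 - αv j / 2) ^ 3) * 1 := by ring
          _ ≤ ((αv j / 8) * (1 - αv j / 2) ^ 3)
              * ((N:ℝ) ^ (αv j) * (mx : ℝ) ^ (-(αv j))) :=
            mul_le_mul_of_nonneg_left hone hc3
          _ = (N:ℝ) ^ (αv j) * ((αv j / 8) * (1 - αv j / 2) ^ 3
              * (mx : ℝ) ^ (-(αv j))) := by ring
      have h7 : αv j * ∑ k, A j k = (N:ℝ) ^ (αv j) * (αv j *
          ∑ k ∈ Finset.range (N - 1), aWeightR (αv j) ((k : ℤ) - ((j : ℕ) : ℤ)))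
          + αv j * bv j := by
        rw [hsumA]; ring
      have h8 : 0 ≤ αv j * bv j := mul_nonneg (le_of_lt hαpos) (hbv j)
      linarith [le_trans h6 h5]
    have hR0 : 0 < ∑ k, A j k := by nlinarith
    nlinarith
  -- stability estimate
  have hstab : ∀ f u : Fin (N - 1) → ℝ, A.mulVec u = f →
      ∀ j, |u j| ≤ (2 / c0) * ⨆ k, |f k| := by
    intro f u hu j
    obtain ⟨j₀, hj₀⟩ := Finite.exists_max (fun j => |u j|)
    have hsup : |f j₀| ≤ ⨆ k, |f k| :=
      le_ciSup (f := fun k => |f k|) (Set.Finite.bddAbove (Set.finite_range _)) j₀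
    have key : (c0 / 2) * |u j₀| ≤ |f j₀| := by
      rcases le_or_gt 0 (u j₀) with h0 | h0
      · have hmax' : ∀ i, u i ≤ u j₀ := by
          intro i
          have := hj₀ i
          rw [abs_of_nonneg h0] at this
          exact le_trans (le_abs_self _) this
        have hmp := maxpr A (c0 / 2) hoff u j₀ (hrow j₀) hmax' h0
        rw [hu] at hmp
        calc (c0 / 2) * |u j₀| = (c0 / 2) * u j₀ := by rw [abs_of_nonneg h0]
          _ ≤ f j₀ := hmp
          _ ≤ |f j₀| := le_abs_self _
      · have hmax' : ∀ i, (-u) i ≤ (-u) j₀ := by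
          intro i
          simp only [Pi.neg_apply]
          have h1' : -u i ≤ |u i| := neg_le_abs _
          have h2' := hj₀ i
          rw [abs_of_neg h0] at h2'
          linarith
        have hmv : A.mulVec (-u) = -f := by rw [Matrix.mulVec_neg, hu]
        have h0' : 0 ≤ (-u) j₀ := by simp only [Pi.neg_apply]; linarith
        have hmp := maxpr A (c0 / 2) hoff (-u) j₀ (hrow j₀) hmax' h0'
        rw [hmv] at hmp
        simp only [Pi.neg_apply] at hmp
        calc (c0 / 2) * |u j₀| = (c0 / 2) * (-u j₀) := by rw [abs_of_neg h0]
          _ ≤ -f j₀ := hmp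
          _ ≤ |f j₀| := neg_le_abs _
    have hj1 : |u j| ≤ |u j₀| := hj₀ j
    have hj2 : |u j₀| ≤ (2 / c0) * |f j₀| := by
      rw [div_mul_eq_mul_div, le_div_iff₀ hc0pos]
      nlinarith [key]
    calc |u j| ≤ |u j₀| := hj1
      _ ≤ (2 / c0) * |f j₀| := hj2
      _ ≤ (2 / c0) * ⨆ k, |f k| :=
          mul_le_mul_of_nonneg_left hsup (by positivity)
  -- invertibility
  have hker : ∀ u : Fin (N - 1) → ℝ, A.mulVec u = 0 → u = 0 := by
    intro u hu
    funext j
    have hb := hstab 0 u hu j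
    have hz : (⨆ k : Fin (N - 1), |(0 : Fin (N - 1) → ℝ) k|) = 0 := by
      simp only [Pi.zero_apply, abs_zero]
      exact ciSup_const
    rw [hz, mul_zero] at hb
    have := abs_nonneg (u j)
    have : |u j| = 0 := le_antisymm hb this
    simpa [abs_eq_zero] using this
  have hdet : A.det ≠ 0 := by
    intro hd
    obtain ⟨v, hv, hv0⟩ := Matrix.exists_mulVec_eq_zero_iff.mpr hd
    exact hv (hker v hv0)
  exact ⟨(Matrix.isUnit_iff_isUnit_det A).mpr (isUnit_iff_ne_zero.mpr hdet), hstab⟩
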